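/- Let G be connected. Suppose (κ, w, y) is feasible for the master problem MP2 and, for every directed cycle C = (V^C, A^C) in the digraph on V whose arcs are the ordered pairs (v,u) with {v,u} ∈ E, and for every vertex ι ∈ V^C, the cycle-breaking inequality ∑_{(v,u)∈A^C} w_{vu} ≤ |V^C| − 1 + 𝟙(|V^C| ≤ K+1)·κ(ι) holds, where 𝟙(·) equals 1 if the enclosed condition is true and 0 otherwise. Then there exists a bijection r : V → {0, 1, ..., n-1} respecting (κ, w); that is, (κ, w, y) belongs to the projection onto the (κ, w, y)-variables of the feasible region of the extended formulation EF. -/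

import Mathlib

open Finset

/-- Feasibility of the triple `(κ, w, y)` for the master problem MP2.
`κ v` indicates whether `v` is in the initial `(K+1)`-clique, `y v` whether `v` is a
double, and `w v u = 1` means that the neighbour `u` witnesses `v`. -/
structure MP2Feasible {V : Type*} [Fintype V] [DecidableEq V] (G : SimpleGraph V)
    [DecidableRel G.Adj] (K : ℕ) (κ y : V → ℤ) (w : V → V → ℤ) : Prop where
  kappa01 : ∀ v, κ v = 0 ∨ κ v = 1
  y01 : ∀ v, y v = 0 ∨ y v = 1
  w01 : ∀ v u, G.Adj v u → w v u = 0 ∨ w v u = 1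
  cliqueSize : ∑ v, κ v = (K : ℤ) + 1
  nonadjClique : ∀ v u, v ≠ u → ¬ G.Adj v u → κ v + κ u ≤ 1
  cliqueWitness : ∀ v u, G.Adj v u → κ v ≤ w u v
  linking : ∀ v, ∑ u ∈ G.neighborFinset v, w v u
      = ((K : ℤ) + 1) * (1 - κ v) - y v + (K : ℤ) * κ v

/-- The bijection `r : V → {0, …, n-1}` respects `(κ, w)`: vertices of the initial clique
get ranks `≤ K`, and outside the initial clique a witness precedes the vertex it witnesses. -/
def Respects {V : Type*} [Fintype V] [DecidableEq V] (G : SimpleGraph V)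
    [DecidableRel G.Adj] (K : ℕ) (κ : V → ℤ) (w : V → V → ℤ)
    (r : V ≃ Fin (Fintype.card V)) : Prop :=
  (∀ v, κ v = 1 → (r v : ℕ) ≤ K) ∧
  (∀ v u, G.Adj v u → κ v = 0 → κ u = 0 → w v u = 1 → (r u : ℕ) < (r v : ℕ))

/-- A directed cycle `c 0 → c 1 → ⋯ → c (m-1) → c 0` in the digraph on `V` whose arcs are
the ordered pairs of adjacent vertices of `G`. -/
def IsDirectedCycle {V : Type*} (G : SimpleGraph V) (m : ℕ) (c : ℕ → V) : Prop :=
  2 ≤ m ∧ (∀ i j, i < m → j < m → c i = c j → i = j) ∧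
  ∀ i < m, G.Adj (c i) (c ((i + 1) % m))

/-- From a transitive-closure step we can extract an explicit finite path. -/
lemma transgen_path {V : Type*} (S : V → V → Prop) {a b : V}
    (h : Relation.TransGen S a b) :
    ∃ k, 1 ≤ k ∧ ∃ c : ℕ → V, c 0 = a ∧ c k = b ∧ ∀ i < k, S (c i) (c (i + 1)) := by
  induction h with
  | @single b' hab =>
      refine ⟨1, le_refl _, fun i => if i = 0 then a else b', by simp, by simp, ?_⟩
      intro i hi
      interval_cases i
      simpa using hab
  | @tail b' d hab hbd ih =>
      obtain ⟨k, hk, c, h0, hkb, hstep⟩ := ih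
      refine ⟨k + 1, by omega, fun i => if i = k + 1 then d else c i,
        by simp only [if_neg (by omega : ¬ (0:ℕ) = k + 1)]; exact h0, by simp, ?_⟩
      intro i hi
      rcases Nat.lt_or_ge i k with h | h
      · simp only [if_neg (by omega : ¬ i = k + 1), if_neg (by omega : ¬ i + 1 = k + 1)]
        exact hstep i h
      · have hik : i = k := by omega
        subst hik
        simp only [if_neg (by omega : ¬ i = i + 1), if_pos rfl]
        rw [hkb]; exact hbd

theorem mp2_with_cycle_cuts_projects_onto_EF {V : Type*} [Fintype V] [DecidableEq V]
    (G : SimpleGraph V) [DecidableRel G.Adj] (hconn : G.Connected) (K : ℕ) (hK : 1 ≤ K)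
    (hn : K + 1 ≤ Fintype.card V) (κ y : V → ℤ) (w : V → V → ℤ)
    (hfeas : MP2Feasible G K κ y w)
    (hcuts : ∀ (m : ℕ) (c : ℕ → V), IsDirectedCycle G m c → ∀ ι < m,
      ∑ i ∈ Finset.range m, w (c i) (c ((i + 1) % m))
        ≤ (m : ℤ) - 1 + (if m ≤ K + 1 then 1 else 0) * κ (c ι)) :
    ∃ r : V ≃ Fin (Fintype.card V), Respects G K κ w r := by
  classical
  -- the "witness arc" relation: an arc v → u means u witnesses v (both non-clique)
  let S : V → V → Prop := fun v u => G.Adj v u ∧ κ v = 0 ∧ κ u = 0 ∧ w v u = 1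
  -- acyclicity of S from the cycle-breaking cuts
  have hacyc : ∀ a : V, ¬ Relation.TransGen S a a := by
    intro a ha
    obtain ⟨k, hk1, c, hc0, hck, hstep⟩ := transgen_path S ha
    have hQ : ∃ m, 1 ≤ m ∧ ∃ c : ℕ → V, ∀ i < m, S (c i) (c ((i + 1) % m)) := by
      refine ⟨k, hk1, c, fun i hi => ?_⟩
      rcases Nat.lt_or_ge (i + 1) k with h | h
      · rw [Nat.mod_eq_of_lt h]; exact hstep i hi
      · have hik : i + 1 = k := by omega
        rw [hik, Nat.mod_self, hc0, ← hck, ← hik]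
        exact hstep i hi
    set m := Nat.find hQ with hm
    obtain ⟨hm1, d, hd⟩ := Nat.find_spec hQ
    have key : ∀ i j, i < j → j < m → d i ≠ d j := by
      intro i j hlt hjm heq
      have hQ' : 1 ≤ j - i ∧ ∃ c : ℕ → V, ∀ t < j - i,
          S (c t) (c ((t + 1) % (j - i))) := by
        refine ⟨by omega, fun t => d (i + t % (j - i)), fun t ht => ?_⟩
        show S (d (i + t % (j - i))) (d (i + (t + 1) % (j - i) % (j - i)))
        have h1 : t % (j - i) = t := Nat.mod_eq_of_lt ht
        have h2 : (t + 1) % (j - i) % (j - i) = (t + 1) % (j - i) :=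
          Nat.mod_mod_of_dvd _ dvd_rfl
        rw [h1, h2]
        rcases Nat.lt_or_ge (t + 1) (j - i) with h3 | h3
        · rw [Nat.mod_eq_of_lt h3]
          have := hd (i + t) (by omega)
          rwa [Nat.mod_eq_of_lt (by omega)] at this
        · have ht1 : t + 1 = j - i := by omega
          rw [ht1, Nat.mod_self, Nat.add_zero]
          have := hd (i + t) (by omega)
          rw [Nat.mod_eq_of_lt (by omega), show i + t + 1 = j by omega] at this
          rwa [heq]
      exact Nat.find_min hQ (by omega) hQ'
    have hinj : ∀ i j, i < m → j < m → d i = d j → i = j := by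
      intro i j him hjm heq
      rcases lt_trichotomy i j with h | h | h
      · exact absurd heq (key i j h hjm)
      · exact h
      · exact absurd heq.symm (key j i h him)
    have hm2 : 2 ≤ m := by
      rcases Nat.lt_or_ge m 2 with h | h
      · have hm1' : m = 1 := by omega
        have := (hd 0 (by omega)).1
        rw [← hm, hm1'] at this
        simp at this
      · exact h
    have hcyc : IsDirectedCycle G m d := ⟨hm2, hinj, fun i hi => (hd i hi).1⟩
    have hsum : ∑ i ∈ Finset.range m, w (d i) (d ((i + 1) % m)) = (m : ℤ) := by
      rw [Finset.sum_congr rfl (fun i hi => (hd i (Finset.mem_range.1 hi)).2.2.2)]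
      simp
      exact hm.symm
    have hc := hcuts m d hcyc 0 (by omega)
    rw [hsum, (hd 0 (by omega)).2.1, mul_zero, add_zero] at hc
    omega
  -- counting the clique
  have hcard1 : Fintype.card {v // κ v = 1} = K + 1 := by
    have h2 : ∑ v, κ v = ((Finset.univ.filter (fun v => κ v = 1)).card : ℤ) := by
      rw [← Finset.sum_boole]
      refine Finset.sum_congr rfl fun v _ => ?_
      rcases hfeas.kappa01 v with h | h <;> simp [h]
    have h3 : ((Finset.univ.filter (fun v => κ v = 1)).card : ℤ) = ((K : ℤ) + 1) := by
      rw [← h2, hfeas.cliqueSize]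
    have h4 : (Finset.univ.filter (fun v => κ v = 1)).card = K + 1 := by
      exact_mod_cast h3
    rw [Fintype.card_subtype, h4]
  have hcardT : Fintype.card {v // ¬ κ v = 1} = Fintype.card V - (K + 1) := by
    rw [Fintype.card_subtype_compl, hcard1]
  -- a partial order on non-clique vertices extending the witness relation
  let T := {v // ¬ κ v = 1}
  let le : T → T → Prop := fun a b => a = b ∨ Relation.TransGen S b.1 a.1
  haveI : IsRefl T le := ⟨fun a => Or.inl rfl⟩
  haveI : IsTrans T le := ⟨by
    rintro a b c (rfl | hab) hbc
    · exact hbc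
    · rcases hbc with rfl | hbc
      · exact Or.inr hab
      · exact Or.inr (hbc.trans hab)⟩
  haveI : IsAntisymm T le := ⟨by
    rintro a b (rfl | hab) hba
    · rfl
    · rcases hba with rfl | hba
      · rfl
      · exact absurd (hab.trans hba) (hacyc _)⟩
  haveI : IsPartialOrder T le := {}
  obtain ⟨s, hs, hles⟩ := extend_partialOrder le
  haveI := hs
  -- sort the non-clique vertices along the linear extension
  let l := Finset.sort Finset.univ s
  have hmem : ∀ t : T, t ∈ l := fun t => (Finset.mem_sort s).2 (Finset.mem_univ t)
  have hlen : l.length = Fintype.card T := by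
    rw [Finset.length_sort, Finset.card_univ]
  have hnodup : l.Nodup := Finset.sort_nodup Finset.univ s
  have hrank : ∀ a b : T, a ≠ b → s a b → l.idxOf a < l.idxOf b := by
    intro a b hne hab
    have hia : l.idxOf a < l.length := List.idxOf_lt_length_iff.2 (hmem a)
    have hib : l.idxOf b < l.length := List.idxOf_lt_length_iff.2 (hmem b)
    rcases lt_trichotomy (l.idxOf a) (l.idxOf b) with h | h | h
    · exact h
    · exact absurd ((List.idxOf_inj (hmem a)).1 h) hne
    · exfalso
      have hsort := Finset.pairwise_sort Finset.univ s
      have hrel := List.Pairwise.rel_get_of_lt hsort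
        (a := ⟨l.idxOf b, hib⟩) (b := ⟨l.idxOf a, hia⟩) h
      rw [List.idxOf_get, List.idxOf_get] at hrel
      exact hne (antisymm hab hrel)
  -- equivalences with initial segments
  let e2 : {v // κ v = 1} ≃ Fin (K + 1) := Fintype.equivFinOfCardEq hcard1
  let g : T → Fin (Fintype.card T) := fun t =>
    ⟨l.idxOf t, by rw [← hlen]; exact List.idxOf_lt_length_iff.2 (hmem t)⟩
  have hgbij : Function.Bijective g := by
    refine (Fintype.bijective_iff_injective_and_card g).2 ⟨?_, by simp⟩
    intro a b h
    exact (List.idxOf_inj (hmem a)).1 (congrArg Fin.val h)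
  let e3 : T ≃ Fin (Fintype.card V - (K + 1)) :=
    (Equiv.ofBijective g hgbij).trans (finCongr hcardT)
  have hsumcard : (K + 1) + (Fintype.card V - (K + 1)) = Fintype.card V := by omega
  let r : V ≃ Fin (Fintype.card V) :=
    ((Equiv.sumCompl (fun v => κ v = 1)).symm.trans
      (Equiv.sumCongr e2 e3)).trans (finSumFinEquiv.trans (finCongr hsumcard))
  refine ⟨r, ?_, ?_⟩
  · intro v hv
    have h1 : (r v : ℕ) = (e2 ⟨v, hv⟩ : ℕ) := by
      have hz : ((Equiv.sumCompl fun v => κ v = 1).symm v) = Sum.inl ⟨v, hv⟩ :=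
        Equiv.sumCompl_symm_apply_of_pos (p := fun v => κ v = 1) (a := v) hv
      simp only [r, Equiv.trans_apply, Equiv.sumCongr_apply, hz, Sum.map_inl,
        finSumFinEquiv_apply_left, finCongr_apply, Fin.coe_cast, Fin.coe_castAdd]
    rw [h1]
    have := (e2 ⟨v, hv⟩).isLt
    omega
  · intro v u hadj hv hu hw
    have hv' : ¬ κ v = 1 := by rw [hv]; norm_num
    have hu' : ¬ κ u = 1 := by rw [hu]; norm_num
    have hSvu : S v u := ⟨hadj, hv, hu, hw⟩
    have hle : le ⟨u, hu'⟩ ⟨v, hv'⟩ := Or.inr (Relation.TransGen.single hSvu)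
    have hne : (⟨u, hu'⟩ : T) ≠ ⟨v, hv'⟩ := by
      intro h
      exact hadj.ne (congrArg Subtype.val h).symm
    have hidx : l.idxOf ⟨u, hu'⟩ < l.idxOf ⟨v, hv'⟩ :=
      hrank _ _ hne (hles _ _ hle)
    have h2 : ∀ x (hx : ¬ κ x = 1), (r x : ℕ) = (K + 1) + (e3 ⟨x, hx⟩ : ℕ) := by
      intro x hx
      have hz : ((Equiv.sumCompl fun v => κ v = 1).symm x) = Sum.inr ⟨x, hx⟩ :=
        Equiv.sumCompl_symm_apply_of_neg (p := fun v => κ v = 1) (a := x) hx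
      simp only [r, Equiv.trans_apply, Equiv.sumCongr_apply, hz, Sum.map_inr,
        finSumFinEquiv_apply_right, finCongr_apply, Fin.coe_cast, Fin.coe_natAdd]
    rw [h2 u hu', h2 v hv']
    have h3 : ∀ x (hx : ¬ κ x = 1), (e3 ⟨x, hx⟩ : ℕ) = l.idxOf ⟨x, hx⟩ := by
      intro x hx
      simp only [e3, Equiv.trans_apply, finCongr_apply, Fin.coe_cast,
        Equiv.ofBijective_apply, g]
    rw [h3 u hu', h3 v hv']
    omega
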